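/- Let 1 ≤ p < 2, let (x_α)_{α ∈ A} be a family of unit vectors in L_p(μ), and suppose there exist pairwise disjoint measurable sets (Ω_α)_{α ∈ A} and ε > 0 such that ‖x_α · 1_{Ω_α}‖_p > ε for all α, and the family (x_α) is C-unconditional. Then (x_α) is equivalent to the unit vector basis of ℓ_p(A): there are constants c, C' > 0 such that for all finitely supported scalar families (a_α), c (∑|a_α|^p)^{1/p} ≤ ‖∑ a_α x_α‖_p ≤ C' (∑|a_α|^p)^{1/p}. -/

import Mathlib

open scoped ENNReal
open MeasureTheory

/-- sign vector attached to a subset `T`. -/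
noncomputable def stmt5sgn {A : Type*} [DecidableEq A] (T : Finset A) (α : A) : ℝ :=
  if α ∈ T then 1 else -1

lemma stmt5sgn_sq {A : Type*} [DecidableEq A] (T : Finset A) (α : A) :
    stmt5sgn T α * stmt5sgn T α = 1 := by
  unfold stmt5sgn; split <;> norm_num

lemma stmt5sgn_pm {A : Type*} [DecidableEq A] (T : Finset A) (α : A) :
    stmt5sgn T α = 1 ∨ stmt5sgn T α = -1 := by
  unfold stmt5sgn; split <;> simp

lemma stmt5_orth {A : Type*} [DecidableEq A] (s : Finset A) (β γ : A)
    (hβ : β ∈ s) :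
    ∑ T ∈ s.powerset, stmt5sgn T β * stmt5sgn T γ
      = if β = γ then (2 : ℝ) ^ s.card else 0 := by
  by_cases h : β = γ
  · subst h
    rw [if_pos rfl, Finset.sum_congr rfl (fun T _ => stmt5sgn_sq T β),
      Finset.sum_const, Finset.card_powerset]
    simp
  · rw [if_neg h]
    obtain ⟨s', hβs', rfl⟩ : ∃ s', β ∉ s' ∧ s = insert β s' :=
      ⟨s.erase β, Finset.notMem_erase _ _, (Finset.insert_erase hβ).symm⟩
    rw [Finset.sum_powerset_insert hβs']
    have h1 : ∀ T ∈ s'.powerset, stmt5sgn T β * stmt5sgn T γ = - stmt5sgn T γ := by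
      intro T hT
      have hβT : β ∉ T := fun hc => hβs' (Finset.mem_powerset.1 hT hc)
      simp only [stmt5sgn, if_neg hβT]
      split <;> ring
    have h2 : ∀ T ∈ s'.powerset,
        stmt5sgn (insert β T) β * stmt5sgn (insert β T) γ = stmt5sgn T γ := by
      intro T hT
      have hγ' : γ ∈ insert β T ↔ γ ∈ T := by
        constructor
        · intro hc; rcases Finset.mem_insert.1 hc with hc | hc
          · exact absurd hc.symm h
          · exact hc
        · intro hc; exact Finset.mem_insert_of_mem hc
      simp [stmt5sgn, hγ']
    rw [Finset.sum_congr rfl h1, Finset.sum_congr rfl h2]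
    simp

lemma stmt5_sq_identity {A : Type*} [DecidableEq A] (s : Finset A) (c : A → ℝ) :
    ∑ T ∈ s.powerset, (∑ α ∈ s, stmt5sgn T α * c α) ^ 2
      = 2 ^ s.card * ∑ α ∈ s, (c α) ^ 2 := by
  have hexp : ∀ T : Finset A, (∑ α ∈ s, stmt5sgn T α * c α) ^ 2
      = ∑ α ∈ s, ∑ γ ∈ s, (stmt5sgn T α * stmt5sgn T γ) * (c α * c γ) := by
    intro T
    rw [sq, Finset.sum_mul_sum]
    exact Finset.sum_congr rfl fun α _ => Finset.sum_congr rfl fun γ _ => by ring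
  rw [Finset.sum_congr rfl fun T _ => hexp T]
  rw [Finset.sum_comm]
  have : ∀ α ∈ s, ∑ T ∈ s.powerset, ∑ γ ∈ s, (stmt5sgn T α * stmt5sgn T γ) * (c α * c γ)
      = 2 ^ s.card * (c α) ^ 2 := by
    intro α hα
    rw [Finset.sum_comm]
    have hin : ∀ γ ∈ s, ∑ T ∈ s.powerset, (stmt5sgn T α * stmt5sgn T γ) * (c α * c γ)
        = (if α = γ then (2 : ℝ) ^ s.card else 0) * (c α * c γ) := by
      intro γ _
      rw [← Finset.sum_mul, stmt5_orth s α γ hα]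
    rw [Finset.sum_congr rfl hin,
      Finset.sum_eq_single α (fun γ _ hne => by rw [if_neg (fun h => hne h.symm), zero_mul])
        (fun h => absurd hα h)]
    rw [if_pos rfl]; ring
  rw [Finset.sum_congr rfl this, ← Finset.mul_sum]

lemma stmt5_rpow_sum_le {ι : Type*} (s : Finset ι) (u : ι → ℝ) (hu : ∀ i ∈ s, 0 ≤ u i)
    {r : ℝ} (hr0 : 0 < r) (hr1 : r ≤ 1) :
    (∑ i ∈ s, u i) ^ r ≤ ∑ i ∈ s, u i ^ r := by
  classical
  induction s using Finset.induction_on with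
  | empty => simp [Real.zero_rpow hr0.ne']
  | @insert a s ha ih =>
    rw [Finset.sum_insert ha, Finset.sum_insert ha]
    have hsum : 0 ≤ ∑ i ∈ s, u i :=
      Finset.sum_nonneg fun i hi => hu i (Finset.mem_insert_of_mem hi)
    have hua : 0 ≤ u a := hu a (Finset.mem_insert_self a s)
    have h2 : (u a + ∑ i ∈ s, u i) ^ r ≤ u a ^ r + (∑ i ∈ s, u i) ^ r := by
      have := NNReal.rpow_add_le_add_rpow (u a).toNNReal (∑ i ∈ s, u i).toNNReal hr0.le hr1
      have hcoe := NNReal.coe_le_coe.2 this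
      push_cast [NNReal.coe_rpow] at hcoe
      rwa [Real.coe_toNNReal _ hua, Real.coe_toNNReal _ hsum] at hcoe
    refine h2.trans (add_le_add_right (ih (fun i hi => hu i (Finset.mem_insert_of_mem hi))) _)

lemma stmt5_K {A : Type*} [DecidableEq A] (s : Finset A) (c : A → ℝ) {q : ℝ}
    (hq1 : 1 ≤ q) (hq2 : q ≤ 2) :
    ∑ T ∈ s.powerset, |∑ α ∈ s, stmt5sgn T α * c α| ^ q
      ≤ 2 ^ s.card * ∑ α ∈ s, |c α| ^ q := by
  have hq0 : (0:ℝ) < q := lt_of_lt_of_le one_pos hq1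
  set n := s.card
  set y : Finset A → ℝ := fun T => ∑ α ∈ s, stmt5sgn T α * c α with hy
  have h2n : (0:ℝ) < 2 ^ n := by positivity
  -- Jensen step
  have hmean := Real.arith_mean_le_rpow_mean s.powerset (fun _ => ((2:ℝ)^n)⁻¹)
    (fun T => |y T| ^ q) (fun T _ => by positivity)
    (by
      rw [Finset.sum_const, Finset.card_powerset, nsmul_eq_mul]
      field_simp
      simp [n])
    (fun T _ => by positivity) (p := 2 / q)
    ((one_le_div hq0).2 hq2)
  have hzq : ∀ T : Finset A, (|y T| ^ q) ^ (2 / q) = y T ^ 2 := by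
    intro T
    rw [← Real.rpow_mul (abs_nonneg _)]
    have hqq : q * (2 / q) = 2 := by field_simp
    rw [hqq, Real.rpow_two, sq_abs]
  have hsq : ∑ T ∈ s.powerset, ((2:ℝ)^n)⁻¹ * (|y T| ^ q) ^ (2 / q)
      = ∑ α ∈ s, (c α) ^ 2 := by
    rw [Finset.sum_congr rfl (fun T _ => by rw [hzq T]), ← Finset.mul_sum,
      stmt5_sq_identity s c, ← mul_assoc, inv_mul_cancel₀ h2n.ne', one_mul]
  rw [hsq] at hmean
  -- hmean : ∑ T, (2^n)⁻¹ * |y T|^q ≤ (∑ α, c α ^2) ^ (1 / (2/q))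
  have h1d : 1 / (2 / q) = q / 2 := by field_simp
  rw [h1d] at hmean
  have hsub : (∑ α ∈ s, (c α) ^ 2) ^ (q / 2) ≤ ∑ α ∈ s, |c α| ^ q := by
    have := stmt5_rpow_sum_le s (fun α => (c α)^2) (fun α _ => sq_nonneg _)
      (r := q / 2) (by positivity) (by linarith)
    refine this.trans_eq (Finset.sum_congr rfl fun α _ => ?_)
    have h1 : (c α) ^ 2 = |c α| ^ (2:ℝ) := by rw [Real.rpow_two, sq_abs]
    have h2 : (2:ℝ) * (q / 2) = q := by ring
    simp only [h1, ← Real.rpow_mul (abs_nonneg _), h2]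
  have : ∑ T ∈ s.powerset, ((2:ℝ)^n)⁻¹ * |y T| ^ q ≤ ∑ α ∈ s, |c α| ^ q :=
    hmean.trans hsub
  rw [← Finset.mul_sum] at this
  calc ∑ T ∈ s.powerset, |y T| ^ q
      = 2 ^ n * (((2:ℝ)^n)⁻¹ * ∑ T ∈ s.powerset, |y T| ^ q) := by
        rw [← mul_assoc, mul_inv_cancel₀ h2n.ne', one_mul]
    _ ≤ 2 ^ n * ∑ α ∈ s, |c α| ^ q := by
        exact mul_le_mul_of_nonneg_left this h2n.le

lemma stmt5_coeFn_sum {Ω : Type*} [MeasurableSpace Ω] {μ : Measure Ω} {p : ℝ≥0∞}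
    [Fact (1 ≤ p)] {ι : Type*} (s : Finset ι) (f : ι → Lp ℝ p μ) :
    ⇑(∑ i ∈ s, f i) =ᵐ[μ] ∑ i ∈ s, ⇑(f i) := by
  classical
  induction s using Finset.induction_on with
  | empty => simp only [Finset.sum_empty]; exact Lp.coeFn_zero ℝ p μ
  | @insert a s ha ih =>
    rw [Finset.sum_insert ha, Finset.sum_insert ha]
    filter_upwards [Lp.coeFn_add (f a) (∑ i ∈ s, f i), ih] with ω h1 h2
    simp only [h1, Pi.add_apply, h2]

/-- For `1 ≤ p < 2`, a `C`-unconditional family of unit vectors in `L_p(μ)` having big disjoint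
pieces (`‖x_α 1_{Ω_α}‖ > ε` on pairwise disjoint sets `Ω_α`) is equivalent to the unit vector
basis of `ℓ_p(A)`. -/
theorem stmt5 (p : ℝ≥0∞) (hp1 : 1 ≤ p) [Fact (1 ≤ p)] (hp2 : p < 2)
    (Ω : Type*) [MeasurableSpace Ω] (μ : Measure Ω)
    (A : Type*) (x : A → Lp ℝ p μ) (hx : ∀ α, ‖x α‖ = 1)
    (S : A → Set Ω) (hSm : ∀ α, MeasurableSet (S α))
    (hdisj : Pairwise (Function.onFun Disjoint S))
    (ε : ℝ) (hε : 0 < ε)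
    (hbig : ∀ α, ENNReal.ofReal ε < eLpNorm ((S α).indicator (x α : Ω → ℝ)) p μ)
    (C : ℝ)
    (huncond : ∀ (s : Finset A) (a : A → ℝ) (sgn : A → ℝ), (∀ α, sgn α = 1 ∨ sgn α = -1) →
      ‖∑ α ∈ s, sgn α • a α • x α‖ ≤ C * ‖∑ α ∈ s, a α • x α‖) :
    ∃ c C' : ℝ, 0 < c ∧ 0 < C' ∧ ∀ (s : Finset A) (a : A → ℝ),
      c * (∑ α ∈ s, |a α| ^ p.toReal) ^ (1 / p.toReal) ≤ ‖∑ α ∈ s, a α • x α‖ ∧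
      ‖∑ α ∈ s, a α • x α‖ ≤ C' * (∑ α ∈ s, |a α| ^ p.toReal) ^ (1 / p.toReal) := by
  classical
  have hptop : p ≠ ∞ := (hp2.trans_le le_top).ne
  have hp0 : p ≠ 0 := fun h => by simp [h] at hp1
  set q := p.toReal with hqdef
  have hq1 : (1:ℝ) ≤ q := by
    have := ENNReal.toReal_mono hptop hp1
    simpa using this
  have hq2 : q ≤ 2 := by
    have := ENNReal.toReal_mono (show (2:ℝ≥0∞) ≠ ∞ by norm_num) hp2.le
    simpa using this
  have hq0 : (0:ℝ) < q := lt_of_lt_of_le one_pos hq1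
  rcases isEmpty_or_nonempty A with hA | hA
  · refine ⟨1, 1, one_pos, one_pos, fun s a => ?_⟩
    have hs : s = ∅ := Finset.eq_empty_of_isEmpty s
    subst hs
    simp only [Finset.sum_empty, norm_zero]
    rw [Real.zero_rpow (by positivity : (0:ℝ) < 1/q).ne']
    norm_num
  · obtain ⟨α₀⟩ := hA
    have hC1 : (1:ℝ) ≤ C := by
      have h := huncond {α₀} (fun _ => 1) (fun _ => 1) (fun _ => Or.inl rfl)
      simpa [hx α₀] using h
    have hC0 : (0:ℝ) < C := lt_of_lt_of_le one_pos hC1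
    refine ⟨ε / C, C, div_pos hε hC0, hC0, fun s a => ?_⟩
    set n := s.card with hn
    set f : Lp ℝ p μ := ∑ α ∈ s, a α • x α with hf
    set fT : Finset A → Lp ℝ p μ := fun T => ∑ α ∈ s, (stmt5sgn T α * a α) • x α with hfT
    -- basic helpers
    have hNq : ∀ g : Ω → ℝ, eLpNorm g p μ ^ q = ∫⁻ ω, (‖g ω‖₊ : ℝ≥0∞) ^ q ∂μ := by
      intro g
      rw [eLpNorm_eq_lintegral_rpow_enorm_toReal hp0 hptop, one_div, ← ENNReal.rpow_mul,
        inv_mul_cancel₀ hq0.ne', ENNReal.rpow_one]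
      rfl
    have hofN : ∀ g : Lp ℝ p μ, eLpNorm (⇑g) p μ = ENNReal.ofReal ‖g‖ := by
      intro g
      rw [Lp.norm_def, ENNReal.ofReal_toReal (Lp.eLpNorm_ne_top g)]
    have hnn : ∀ r : ℝ, (‖r‖₊ : ℝ≥0∞) ^ q = ENNReal.ofReal (|r| ^ q) := by
      intro r
      rw [← enorm_eq_nnnorm, ← ofReal_norm, Real.norm_eq_abs,
        ENNReal.ofReal_rpow_of_nonneg (abs_nonneg r) hq0.le]
    have h2n0 : ((2:ℝ≥0∞) ^ n) ≠ 0 := by positivity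
    have h2ntop : ((2:ℝ≥0∞) ^ n) ≠ ∞ := by
      exact ENNReal.pow_ne_top (by norm_num)
    -- unconditionality
    have hCf : ∀ T : Finset A, ‖fT T‖ ≤ C * ‖f‖ := by
      intro T
      have h := huncond s a (stmt5sgn T) (fun α => stmt5sgn_pm T α)
      simp only [smul_smul] at h
      exact h
    have hfC : ∀ T : Finset A, ‖f‖ ≤ C * ‖fT T‖ := by
      intro T
      have h := huncond s (fun α => stmt5sgn T α * a α) (stmt5sgn T)
        (fun α => stmt5sgn_pm T α)
      simp only [smul_smul] at h
      have hb : ∀ α ∈ s, (stmt5sgn T α * (stmt5sgn T α * a α)) • x α = a α • x α := by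
        intro α _
        rw [← mul_assoc, stmt5sgn_sq, one_mul]
      rwa [Finset.sum_congr rfl hb] at h
    -- algebraic averaging identity
    have halg : ∀ β ∈ s, ∑ T ∈ s.powerset, stmt5sgn T β • fT T
        = ((2:ℝ) ^ n) • (a β • x β) := by
      intro β hβ
      have h1 : ∀ T ∈ s.powerset, stmt5sgn T β • fT T
          = ∑ α ∈ s, (stmt5sgn T β * stmt5sgn T α) • (a α • x α) := by
        intro T _
        rw [show fT T = ∑ α ∈ s, (stmt5sgn T α * a α) • x α from rfl, Finset.smul_sum]
        exact Finset.sum_congr rfl fun α _ => by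
          rw [smul_smul, smul_smul, mul_assoc]
      rw [Finset.sum_congr rfl h1, Finset.sum_comm]
      have h2 : ∀ α ∈ s, ∑ T ∈ s.powerset, (stmt5sgn T β * stmt5sgn T α) • (a α • x α)
          = (if β = α then (2:ℝ) ^ n else 0) • (a α • x α) := by
        intro α _
        rw [← Finset.sum_smul, stmt5_orth s β α hβ]
      rw [Finset.sum_congr rfl h2,
        Finset.sum_eq_single β
          (fun α _ hne => by rw [if_neg (fun h => hne h.symm), zero_smul])
          (fun h => absurd hβ h), if_pos rfl]
    have hrep : ∀ β ∈ s, a β • x β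
        = (((2:ℝ) ^ n)⁻¹) • ∑ T ∈ s.powerset, stmt5sgn T β • fT T := by
      intro β hβ
      rw [halg β hβ, smul_smul, inv_mul_cancel₀ (by positivity : ((2:ℝ)^n) ≠ 0), one_smul]
    -- indicator smul helper
    have hsmul_ind : ∀ (c : ℝ) (g : Lp ℝ p μ) (V : Set Ω),
        eLpNorm (V.indicator (⇑(c • g))) p μ
          = ENNReal.ofReal |c| * eLpNorm (V.indicator (⇑g)) p μ := by
      intro c g V
      have h1 : V.indicator (⇑(c • g)) =ᵐ[μ] V.indicator (c • ⇑g) :=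
        (Lp.coeFn_smul c g).indicator
      have h2 : V.indicator (c • ⇑g) = c • V.indicator (⇑g) := by
        funext ω
        by_cases h : ω ∈ V <;>
          simp [Set.indicator_of_mem, Set.indicator_of_notMem, h]
      rw [eLpNorm_congr_ae h1, h2, eLpNorm_const_smul]
      congr 1
      rw [← ofReal_norm, Real.norm_eq_abs]
    -- the per-β estimate
    have hβbound : ∀ β ∈ s, ENNReal.ofReal ε * ENNReal.ofReal |a β|
        ≤ ((2:ℝ≥0∞) ^ n)⁻¹
          * ∑ T ∈ s.powerset, eLpNorm ((S β).indicator (⇑(fT T))) p μ := by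
      intro β hβ
      have hA1 : ENNReal.ofReal ε * ENNReal.ofReal |a β|
          ≤ eLpNorm ((S β).indicator (⇑(a β • x β))) p μ := by
        rw [hsmul_ind (a β) (x β) (S β), mul_comm]
        exact mul_le_mul_right (hbig β).le _
      refine hA1.trans ?_
      rw [hrep β hβ, hsmul_ind]
      -- |(2^n)⁻¹| and the sum
      have habs : ENNReal.ofReal |((2:ℝ) ^ n)⁻¹| = ((2:ℝ≥0∞) ^ n)⁻¹ := by
        rw [abs_of_nonneg (by positivity), ENNReal.ofReal_inv_of_pos (by positivity),
          ENNReal.ofReal_pow (by norm_num)]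
        norm_num
      rw [habs]
      refine mul_le_mul_right ?_ _
      -- triangle inequality for the indicator of the sum
      have hsum1 : (S β).indicator (⇑(∑ T ∈ s.powerset, stmt5sgn T β • fT T))
          =ᵐ[μ] ∑ T ∈ s.powerset, (S β).indicator (⇑(stmt5sgn T β • fT T)) := by
        have h1 := stmt5_coeFn_sum s.powerset (fun T => stmt5sgn T β • fT T)
        filter_upwards [h1.indicator (s := S β)] with ω hω
        rw [hω]
        by_cases h : ω ∈ S β
        · rw [Set.indicator_of_mem h, Finset.sum_apply, Finset.sum_apply]
          exact Finset.sum_congr rfl fun T _ => (Set.indicator_of_mem h _).symm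
        · rw [Set.indicator_of_notMem h, Finset.sum_apply]
          symm
          exact Finset.sum_eq_zero fun T _ => Set.indicator_of_notMem h _
      rw [eLpNorm_congr_ae hsum1]
      refine (eLpNorm_sum_le (fun T _ =>
        ((Lp.aestronglyMeasurable _).indicator (hSm β))) hp1).trans ?_
      refine Finset.sum_le_sum fun T _ => ?_
      rw [hsmul_ind]
      have : |stmt5sgn T β| = 1 := by
        rcases stmt5sgn_pm T β with h | h <;> simp [h]
      rw [this]
      simp
    -- disjointness estimate
    have hdisjsum : ∀ g : Ω → ℝ,
        ∑ β ∈ s, eLpNorm ((S β).indicator g) p μ ^ q ≤ eLpNorm g p μ ^ q := by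
      intro g
      have hind : ∀ β : A, (fun ω => (‖(S β).indicator g ω‖₊ : ℝ≥0∞) ^ q)
          = (S β).indicator (fun ω => (‖g ω‖₊ : ℝ≥0∞) ^ q) := by
        intro β
        funext ω
        by_cases h : ω ∈ S β <;>
          simp [Set.indicator_of_mem, Set.indicator_of_notMem, h,
            ENNReal.zero_rpow_of_pos hq0]
      calc ∑ β ∈ s, eLpNorm ((S β).indicator g) p μ ^ q
          = ∑ β ∈ s, ∫⁻ ω in S β, (‖g ω‖₊ : ℝ≥0∞) ^ q ∂μ := by
            refine Finset.sum_congr rfl fun β _ => ?_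
            rw [hNq, hind β, lintegral_indicator (hSm β)]
        _ = ∫⁻ ω in ⋃ β ∈ s, S β, (‖g ω‖₊ : ℝ≥0∞) ^ q ∂μ :=
            (lintegral_biUnion_finset
              (fun i _ j _ hij => hdisj hij) (fun b _ => hSm b) _).symm
        _ ≤ ∫⁻ ω, (‖g ω‖₊ : ℝ≥0∞) ^ q ∂μ :=
            lintegral_mono' Measure.restrict_le_self le_rfl
        _ = eLpNorm g p μ ^ q := (hNq g).symm
    -- LOWER BOUND
    have hlow : ε / C * (∑ α ∈ s, |a α| ^ q) ^ (1/q) ≤ ‖f‖ := by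
      have hjensen : ∀ β ∈ s, (ENNReal.ofReal ε * ENNReal.ofReal |a β|) ^ q
          ≤ ∑ T ∈ s.powerset, ((2:ℝ≥0∞) ^ n)⁻¹
              * eLpNorm ((S β).indicator (⇑(fT T))) p μ ^ q := by
        intro β hβ
        have h1 := ENNReal.rpow_le_rpow (hβbound β hβ) hq0.le
        refine h1.trans ?_
        rw [Finset.mul_sum]
        refine (ENNReal.rpow_arith_mean_le_arith_mean_rpow s.powerset
          (fun _ => ((2:ℝ≥0∞) ^ n)⁻¹)
          (fun T => eLpNorm ((S β).indicator (⇑(fT T))) p μ) ?_ hq1)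
        rw [Finset.sum_const, Finset.card_powerset, nsmul_eq_mul]
        push_cast
        rw [ENNReal.mul_inv_cancel h2n0 h2ntop]
      have hmain : ∑ β ∈ s, (ENNReal.ofReal ε * ENNReal.ofReal |a β|) ^ q
          ≤ ENNReal.ofReal (C * ‖f‖) ^ q := by
        calc ∑ β ∈ s, (ENNReal.ofReal ε * ENNReal.ofReal |a β|) ^ q
            ≤ ∑ β ∈ s, ∑ T ∈ s.powerset, ((2:ℝ≥0∞) ^ n)⁻¹
                * eLpNorm ((S β).indicator (⇑(fT T))) p μ ^ q :=
              Finset.sum_le_sum hjensen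
          _ = ((2:ℝ≥0∞) ^ n)⁻¹ * ∑ T ∈ s.powerset, ∑ β ∈ s,
                eLpNorm ((S β).indicator (⇑(fT T))) p μ ^ q := by
              rw [Finset.sum_comm, Finset.mul_sum]
              exact Finset.sum_congr rfl fun T _ => by rw [Finset.mul_sum]
          _ ≤ ((2:ℝ≥0∞) ^ n)⁻¹ * ∑ T ∈ s.powerset, eLpNorm (⇑(fT T)) p μ ^ q := by
              refine mul_le_mul_right (Finset.sum_le_sum fun T _ => hdisjsum _) _
          _ ≤ ((2:ℝ≥0∞) ^ n)⁻¹ * ∑ T ∈ s.powerset, ENNReal.ofReal (C * ‖f‖) ^ q := by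
              refine mul_le_mul_right (Finset.sum_le_sum fun T _ => ?_) _
              refine ENNReal.rpow_le_rpow ?_ hq0.le
              rw [hofN]
              exact ENNReal.ofReal_le_ofReal (hCf T)
          _ = ENNReal.ofReal (C * ‖f‖) ^ q := by
              rw [Finset.sum_const, Finset.card_powerset, nsmul_eq_mul, ← mul_assoc]
              push_cast
              rw [ENNReal.inv_mul_cancel h2n0 h2ntop, one_mul]
      -- convert to a real inequality
      have hreal : ∑ β ∈ s, (ε * |a β|) ^ q ≤ (C * ‖f‖) ^ q := by
        have h1 : ∀ β ∈ s, (ENNReal.ofReal ε * ENNReal.ofReal |a β|) ^ q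
            = ENNReal.ofReal ((ε * |a β|) ^ q) := by
          intro β _
          rw [← ENNReal.ofReal_mul hε.le,
            ENNReal.ofReal_rpow_of_nonneg (by positivity) hq0.le]
        rw [Finset.sum_congr rfl h1, ← ENNReal.ofReal_sum_of_nonneg
          (fun β _ => by positivity),
          ENNReal.ofReal_rpow_of_nonneg (by positivity) hq0.le] at hmain
        exact (ENNReal.ofReal_le_ofReal_iff (by positivity)).1 hmain
      have hsplit : ∑ β ∈ s, (ε * |a β|) ^ q = ε ^ q * ∑ β ∈ s, |a β| ^ q := by
        rw [Finset.mul_sum]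
        exact Finset.sum_congr rfl fun β _ =>
          Real.mul_rpow hε.le (abs_nonneg _)
      rw [hsplit] at hreal
      have h2 := Real.rpow_le_rpow (by positivity) hreal (by positivity : (0:ℝ) ≤ 1/q)
      rw [Real.mul_rpow (by positivity) (by positivity),
        ← Real.rpow_mul hε.le, mul_one_div, div_self hq0.ne', Real.rpow_one,
        ← Real.rpow_mul (by positivity), mul_one_div, div_self hq0.ne',
        Real.rpow_one] at h2
      rw [div_mul_eq_mul_div, div_le_iff₀ hC0]
      calc ε * (∑ α ∈ s, |a α| ^ q) ^ (1/q) ≤ C * ‖f‖ := h2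
        _ = ‖f‖ * C := mul_comm _ _
    -- UPPER BOUND
    have hupper : ‖f‖ ≤ C * (∑ α ∈ s, |a α| ^ q) ^ (1/q) := by
      -- a.e. representation of fT
      have haeT : ∀ T : Finset A, ⇑(fT T)
          =ᵐ[μ] fun ω => ∑ α ∈ s, stmt5sgn T α * (a α * (x α : Ω → ℝ) ω) := by
        intro T
        have h1 := stmt5_coeFn_sum s (fun α => (stmt5sgn T α * a α) • x α)
        have h2 : ∀ᵐ ω ∂μ, ∀ α ∈ s,
            (⇑((stmt5sgn T α * a α) • x α)) ω
              = (stmt5sgn T α * a α) * (x α : Ω → ℝ) ω := by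
          rw [Filter.eventually_all_finset]
          intro α _
          filter_upwards [Lp.coeFn_smul (stmt5sgn T α * a α) (x α)] with ω h
          simpa using h
        filter_upwards [h1, h2] with ω h1' h2'
        rw [h1', Finset.sum_apply]
        exact Finset.sum_congr rfl fun α hα => by rw [h2' α hα, mul_assoc]
      have hae : ∀ᵐ ω ∂μ, ∀ T ∈ s.powerset, (⇑(fT T)) ω
          = ∑ α ∈ s, stmt5sgn T α * (a α * (x α : Ω → ℝ) ω) := by
        rw [Filter.eventually_all_finset]
        intro T _
        exact haeT T
      -- the key ENNReal estimate
      have hU : ∑ T ∈ s.powerset, eLpNorm (⇑(fT T)) p μ ^ q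
          ≤ (2:ℝ≥0∞) ^ n * ∑ α ∈ s, ENNReal.ofReal (|a α| ^ q) := by
        have hmeas : ∀ T ∈ s.powerset,
            AEMeasurable (fun ω => (‖(⇑(fT T)) ω‖₊ : ℝ≥0∞) ^ q) μ :=
          fun T _ => (Lp.aestronglyMeasurable (fT T)).enorm.pow_const q
        calc ∑ T ∈ s.powerset, eLpNorm (⇑(fT T)) p μ ^ q
            = ∫⁻ ω, ∑ T ∈ s.powerset, (‖(⇑(fT T)) ω‖₊ : ℝ≥0∞) ^ q ∂μ := by
              rw [lintegral_finset_sum' s.powerset hmeas]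
              exact Finset.sum_congr rfl fun T _ => hNq _
          _ ≤ ∫⁻ ω, (2:ℝ≥0∞) ^ n * ∑ α ∈ s, ENNReal.ofReal (|a α| ^ q)
                * (‖(x α : Ω → ℝ) ω‖₊ : ℝ≥0∞) ^ q ∂μ := by
              refine lintegral_mono_ae ?_
              filter_upwards [hae] with ω hω
              have hK := stmt5_K s (fun α => a α * (x α : Ω → ℝ) ω) hq1 hq2
              calc ∑ T ∈ s.powerset, (‖(⇑(fT T)) ω‖₊ : ℝ≥0∞) ^ q
                  = ENNReal.ofReal (∑ T ∈ s.powerset,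
                      |∑ α ∈ s, stmt5sgn T α * (a α * (x α : Ω → ℝ) ω)| ^ q) := by
                    rw [ENNReal.ofReal_sum_of_nonneg (fun T _ => by positivity)]
                    exact Finset.sum_congr rfl fun T hT => by
                      rw [hnn, hω T hT]
                _ ≤ ENNReal.ofReal ((2:ℝ) ^ n
                      * ∑ α ∈ s, |a α * (x α : Ω → ℝ) ω| ^ q) :=
                    ENNReal.ofReal_le_ofReal hK
                _ = (2:ℝ≥0∞) ^ n * ∑ α ∈ s, ENNReal.ofReal (|a α| ^ q)
                      * (‖(x α : Ω → ℝ) ω‖₊ : ℝ≥0∞) ^ q := by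
                    rw [ENNReal.ofReal_mul (by positivity),
                      ENNReal.ofReal_sum_of_nonneg (fun α _ => by positivity),
                      ENNReal.ofReal_pow (by norm_num)]
                    norm_num
                    refine congrArg (fun z => (2:ℝ≥0∞) ^ n * z) ?_
                    exact Finset.sum_congr rfl fun α _ => by
                      rw [Real.mul_rpow (abs_nonneg _) (abs_nonneg _),
                        ENNReal.ofReal_mul (by positivity), hnn]
          _ = (2:ℝ≥0∞) ^ n * ∑ α ∈ s, ENNReal.ofReal (|a α| ^ q) := by
              rw [lintegral_const_mul' _ _ h2ntop,
                lintegral_finset_sum' s (fun α _ => show AEMeasurable (fun ω =>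
                  ENNReal.ofReal (|a α| ^ q) * (‖(x α : Ω → ℝ) ω‖₊ : ℝ≥0∞) ^ q) μ from
                  ((Lp.aestronglyMeasurable (x α)).enorm.pow_const q).const_mul _)]
              congr 1
              refine Finset.sum_congr rfl fun α _ => ?_
              rw [lintegral_const_mul' _ _ ENNReal.ofReal_ne_top,
                ← hNq, hofN, hx α]
              simp [ENNReal.one_rpow]
      have hT0 : s.powerset.Nonempty := ⟨∅, Finset.empty_mem_powerset s⟩
      have hV : ∀ T ∈ s.powerset, ENNReal.ofReal ‖f‖ ^ q
          ≤ ENNReal.ofReal C ^ q * eLpNorm (⇑(fT T)) p μ ^ q := by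
        intro T _
        rw [← ENNReal.mul_rpow_of_nonneg _ _ hq0.le]
        refine ENNReal.rpow_le_rpow ?_ hq0.le
        rw [hofN, ← ENNReal.ofReal_mul hC0.le]
        exact ENNReal.ofReal_le_ofReal (hfC T)
      have hsum : (2:ℝ≥0∞) ^ n * ENNReal.ofReal ‖f‖ ^ q
          ≤ ENNReal.ofReal C ^ q
            * ((2:ℝ≥0∞) ^ n * ∑ α ∈ s, ENNReal.ofReal (|a α| ^ q)) := by
        calc (2:ℝ≥0∞) ^ n * ENNReal.ofReal ‖f‖ ^ q
            = ∑ _T ∈ s.powerset, ENNReal.ofReal ‖f‖ ^ q := by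
              rw [Finset.sum_const, Finset.card_powerset, nsmul_eq_mul]
              push_cast
              ring
          _ ≤ ∑ T ∈ s.powerset, ENNReal.ofReal C ^ q * eLpNorm (⇑(fT T)) p μ ^ q :=
              Finset.sum_le_sum hV
          _ = ENNReal.ofReal C ^ q * ∑ T ∈ s.powerset, eLpNorm (⇑(fT T)) p μ ^ q := by
              rw [Finset.mul_sum]
          _ ≤ _ := mul_le_mul_right hU _
      have hcancel : ENNReal.ofReal ‖f‖ ^ q
          ≤ ENNReal.ofReal C ^ q * ∑ α ∈ s, ENNReal.ofReal (|a α| ^ q) := by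
        have h := hsum
        rw [show ENNReal.ofReal C ^ q * ((2:ℝ≥0∞) ^ n * ∑ α ∈ s, ENNReal.ofReal (|a α| ^ q))
            = (2:ℝ≥0∞) ^ n * (ENNReal.ofReal C ^ q * ∑ α ∈ s, ENNReal.ofReal (|a α| ^ q))
          from by ring] at h
        exact (ENNReal.mul_le_mul_iff_right h2n0 h2ntop).1 h
      have hrealU : ‖f‖ ^ q ≤ C ^ q * ∑ α ∈ s, |a α| ^ q := by
        rw [ENNReal.ofReal_rpow_of_nonneg (norm_nonneg _) hq0.le,
          ENNReal.ofReal_rpow_of_nonneg hC0.le hq0.le,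
          ← ENNReal.ofReal_sum_of_nonneg (fun α _ => by positivity),
          ← ENNReal.ofReal_mul (by positivity)] at hcancel
        exact (ENNReal.ofReal_le_ofReal_iff (by positivity)).1 hcancel
      have h2 := Real.rpow_le_rpow (by positivity) hrealU (by positivity : (0:ℝ) ≤ 1/q)
      rw [Real.mul_rpow (by positivity) (by positivity),
        ← Real.rpow_mul (norm_nonneg _), mul_one_div, div_self hq0.ne', Real.rpow_one,
        ← Real.rpow_mul hC0.le, mul_one_div, div_self hq0.ne', Real.rpow_one] at h2
      exact h2
    exact ⟨hlow, hupper⟩
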